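/- Let u: R → U be a flat injective ring epimorphism of commutative rings with associated Gabriel topology G. Then the natural ring homomorphism α from the completion Λ(R) = lim←_{J∈G} R/J to End_R(U/R) (induced by the action of Λ(R) on the G-torsion module U/R) is a ring isomorphism. -/

import Mathlib

universe u

noncomputable section

/-- The Gabriel topology associated to the ring epimorphism `R → U`:
the ideals `J` with `JU = U`. -/
def gabrielSets (R : Type u) [CommRing R] (U : Type u) [CommRing U] [Algebra R U] :
    Set (Ideal R) :=
  {J : Ideal R | J • (⊤ : Submodule R U) = ⊤}

/-- The completion `Λ(R) = lim← R/J`, for `J` ranging over the Gabriel topology,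
realised as the subring of compatible families in `∏_{J} R/J`. -/
def gabrielCompletion (R : Type u) [CommRing R] (U : Type u) [CommRing U] [Algebra R U] :
    Subring ((J : gabrielSets R U) → R ⧸ (J : Ideal R)) where
  carrier := {x | ∀ (J J' : gabrielSets R U) (h : (J : Ideal R) ≤ (J' : Ideal R)),
    Ideal.Quotient.factor h (x J) = x J'}
  zero_mem' := fun J J' h => by simp
  one_mem' := fun J J' h => by simp
  add_mem' := fun {a b} ha hb J J' h => by
    rw [Pi.add_apply, Pi.add_apply, map_add, ha J J' h, hb J J' h]
  mul_mem' := fun {a b} ha hb J J' h => by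
    rw [Pi.mul_apply, Pi.mul_apply, map_mul, ha J J' h, hb J J' h]
  neg_mem' := fun {a} ha J J' h => by
    rw [Pi.neg_apply, Pi.neg_apply, map_neg, ha J J' h]

/-- The annihilator `Ann_R(z + R) = {r : R | r z ∈ R}` of an element `z + R` of
`K = U/R`. -/
def annCoset (R : Type u) [CommRing R] (U : Type u) [CommRing U] [Algebra R U]
    (z : U) : Ideal R :=
  (LinearMap.range (Algebra.linearMap R U)).comap (LinearMap.toSpanSingleton R U z)

section Aux
open TensorProduct

variable {R : Type u} [CommRing R] {U : Type u} [CommRing U] [Algebra R U]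

lemma s15_mem_annCoset {z : U} {r : R} :
    r ∈ annCoset R U z ↔ r • z ∈ LinearMap.range (Algebra.linearMap R U) := Iff.rfl

lemma s15_mem_smul {I : Ideal R} {M : Submodule R U} {x : U} (hx : x ∈ I • M) :
    ∃ l : List (R × U), (∀ p ∈ l, p.1 ∈ I ∧ p.2 ∈ M) ∧
      (l.map fun p => p.1 • p.2).sum = x := by
  refine Submodule.smul_induction_on hx ?_ ?_
  · intro r hr n hn
    exact ⟨[(r, n)], by simp [hr, hn], by simp⟩
  · rintro a b ⟨la, hla, hsa⟩ ⟨lb, hlb, hsb⟩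
    refine ⟨la ++ lb, ?_, by simp [hsa, hsb]⟩
    intro p hp
    rcases List.mem_append.1 hp with h | h
    exacts [hla p h, hlb p h]

lemma s15_mul_list_sum (x : U) (g : U → U) (l : List (R × U)) :
    x * (l.map fun p => p.1 • g p.2).sum = (l.map fun p => p.1 • (x * g p.2)).sum := by
  induction l with
  | nil => simp
  | cons p l ih => simp [mul_add, ih, mul_smul_comm]

lemma s15_smul_list_sum (s : R) (g : U → U) (l : List (R × U)) :
    (l.map fun p => p.1 • (s • g p.2)).sum = s • (l.map fun p => p.1 • g p.2).sum := by
  induction l with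
  | nil => simp
  | cons p l ih => simp [ih, smul_add, smul_comm s]

lemma s15_smul_top {I : Ideal R} (h1 : (1 : U) ∈ I • (⊤ : Submodule R U)) :
    I ∈ gabrielSets R U := by
  rw [gabrielSets, Set.mem_setOf_eq, eq_top_iff]
  intro x _
  obtain ⟨l, hl, hs⟩ := s15_mem_smul h1
  have hx : x = (l.map fun p => p.1 • (x * p.2)).sum := by
    have := s15_mul_list_sum x id l
    simp only [id] at this
    rw [← this, hs, mul_one]
  rw [hx]
  refine list_sum_mem ?_
  intro y hy
  simp only [List.mem_map] at hy
  obtain ⟨p, hp, rfl⟩ := hy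
  exact Submodule.smul_mem_smul (hl p hp).1 trivial

lemma s15_one_mem {J : Ideal R} (hJ : J ∈ gabrielSets R U) :
    (1 : U) ∈ J • (⊤ : Submodule R U) := by
  rw [show J • (⊤ : Submodule R U) = ⊤ from hJ]; trivial

lemma s15_inf_mem {J J' : Ideal R} (hJ : J ∈ gabrielSets R U) (hJ' : J' ∈ gabrielSets R U) :
    J ⊓ J' ∈ gabrielSets R U := by
  have h : (J * J') • (⊤ : Submodule R U) = ⊤ := by
    rw [← Ideal.smul_eq_mul, Submodule.smul_assoc, show J' • (⊤ : Submodule R U) = ⊤ from hJ',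
      show J • (⊤ : Submodule R U) = ⊤ from hJ]
  have hle : (J * J') • (⊤ : Submodule R U) ≤ (J ⊓ J') • ⊤ :=
    Submodule.smul_mono_left (Ideal.mul_le_inf)
  have hone : (1 : U) ∈ (J * J') • (⊤ : Submodule R U) := by rw [h]; trivial
  exact s15_smul_top (hle hone)

/-- Torsion: the annihilator of any coset is in the Gabriel topology. -/
lemma s15_ann_mem [Module.Flat R U]
    (hepi : Function.Bijective (LinearMap.mul' R U)) (z : U) :
    annCoset R U z ∈ gabrielSets R U := by
  set D : Submodule R U := LinearMap.range (Algebra.linearMap R U) with hD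
  set J : Ideal R := annCoset R U z with hJdef
  -- z ⊗ 1 = 1 ⊗ z
  have h1 : (z ⊗ₜ[R] (1 : U) : U ⊗[R] U) = 1 ⊗ₜ[R] z := by
    apply hepi.1
    rw [LinearMap.mul'_apply, LinearMap.mul'_apply, mul_one, one_mul]
  -- push to (U/D) ⊗ U
  have h2 : (D.mkQ z) ⊗ₜ[R] (1 : U) = (0 : (U ⧸ D) ⊗[R] U) := by
    have := congrArg (LinearMap.rTensor U D.mkQ) h1
    rw [LinearMap.rTensor_tmul, LinearMap.rTensor_tmul] at this
    have hmk1 : D.mkQ (1 : U) = 0 := by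
      rw [Submodule.mkQ_apply, Submodule.Quotient.mk_eq_zero]
      exact ⟨1, by simp⟩
    rw [this, hmk1, TensorProduct.zero_tmul]
  -- the injective map (R/J) → U/D
  have hle : J ≤ LinearMap.ker (LinearMap.toSpanSingleton R (U ⧸ D) (D.mkQ z)) := by
    intro r hr
    rw [LinearMap.mem_ker, LinearMap.toSpanSingleton_apply, ← map_smul,
      Submodule.mkQ_apply, Submodule.Quotient.mk_eq_zero]
    exact hr
  set φ : (R ⧸ J) →ₗ[R] (U ⧸ D) :=
    Submodule.liftQ (J : Submodule R R) (LinearMap.toSpanSingleton R (U ⧸ D) (D.mkQ z)) hle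
      with hφ
  have hφinj : Function.Injective φ := by
    rw [← LinearMap.ker_eq_bot]
    apply Submodule.ker_liftQ_eq_bot
    intro r hr
    rw [LinearMap.mem_ker, LinearMap.toSpanSingleton_apply, ← map_smul,
      Submodule.mkQ_apply, Submodule.Quotient.mk_eq_zero] at hr
    exact hr
  have hψ : Function.Injective (LinearMap.rTensor U φ) :=
    Module.Flat.rTensor_preserves_injective_linearMap φ hφinj
  have h3 : ((Ideal.Quotient.mk J 1) ⊗ₜ[R] (1 : U) : (R ⧸ J) ⊗[R] U) = 0 := by
    apply hψ
    rw [LinearMap.rTensor_tmul, map_zero]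
    have : φ (Ideal.Quotient.mk J 1) = D.mkQ z := by
      rw [← Ideal.Quotient.mk_eq_mk, hφ, Submodule.liftQ_apply,
        LinearMap.toSpanSingleton_apply, one_smul]
    rw [this, h2]
  have h4 := congrArg (TensorProduct.quotTensorEquivQuotSMul U J) h3
  rw [TensorProduct.quotTensorEquivQuotSMul_mk_tmul, map_zero, one_smul,
    Submodule.Quotient.mk_eq_zero] at h4
  exact s15_smul_top h4

end Aux

section Aux2

variable {R : Type u} [CommRing R] {U : Type u} [CommRing U] [Algebra R U]

/-- The colon submodule `(R :_U N) = {z : U | N z ⊆ R}`. -/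
def s15_col (N : Ideal R) : Submodule R U where
  carrier := {z : U | ∀ a ∈ N, a • z ∈ LinearMap.range (Algebra.linearMap R U)}
  add_mem' := fun {x y} hx hy a ha => by rw [smul_add]; exact add_mem (hx a ha) (hy a ha)
  zero_mem' := fun a ha => by rw [smul_zero]; exact zero_mem _
  smul_mem' := fun c {x} hx a ha => by rw [smul_comm]; exact Submodule.smul_mem _ c (hx a ha)

lemma s15_mem_col {N : Ideal R} {z : U} :
    z ∈ s15_col N ↔ ∀ a ∈ N, a • z ∈ LinearMap.range (Algebra.linearMap R U) := Iff.rfl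

lemma s15_self_mem_col (z : U) : z ∈ s15_col (annCoset R U z) := fun _ ha => ha

lemma s15_one_mem_col (N : Ideal R) : (1 : U) ∈ s15_col N := by
  intro a _
  exact ⟨a, by rw [Algebra.linearMap_apply, Algebra.smul_def, mul_one]⟩

/-- the predicate `S N r`: `f` acts as `r` on elements annihilated by `N`. -/
def s15_S (f : Module.End R (U ⧸ LinearMap.range (Algebra.linearMap R U)))
    (N : Ideal R) (r : R) : Prop :=
  ∀ z ∈ s15_col (R := R) (U := U) N,
    f (Submodule.Quotient.mk z) = Submodule.Quotient.mk (r • z)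

lemma s15_S_mono {f : Module.End R (U ⧸ LinearMap.range (Algebra.linearMap R U))}
    {N N' : Ideal R} (h : N ≤ N') {r : R} (hr : s15_S f N r) : s15_S f N' r :=
  fun z hz => hr z (fun a ha => hz a (h ha))

lemma s15_push (f : Module.End R (U ⧸ LinearMap.range (Algebra.linearMap R U)))
    (z : U) (g : U → U) (l : List (R × U))
    (hD : ∀ p ∈ l, p.1 • z ∈ LinearMap.range (Algebra.linearMap R U))
    (hf : ∀ p ∈ l, f (Submodule.Quotient.mk p.2) = Submodule.Quotient.mk (g p.2)) :
    f (Submodule.Quotient.mk ((l.map fun p => p.1 • (z * p.2)).sum)) =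
      Submodule.Quotient.mk ((l.map fun p => p.1 • (z * g p.2)).sum) := by
  induction l with
  | nil => simp
  | cons p l ih =>
    simp only [List.map_cons, List.sum_cons]
    obtain ⟨b, hb⟩ := hD p (List.mem_cons_self)
    rw [Algebra.linearMap_apply] at hb
    have h1 : p.1 • (z * p.2) = b • p.2 := by
      rw [← smul_mul_assoc, ← hb, ← Algebra.smul_def]
    have h2 : p.1 • (z * g p.2) = b • g p.2 := by
      rw [← smul_mul_assoc, ← hb, ← Algebra.smul_def]
    have hterm : f (Submodule.Quotient.mk (p.1 • (z * p.2))) =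
        Submodule.Quotient.mk (p.1 • (z * g p.2)) := by
      rw [h1, h2, Submodule.Quotient.mk_smul, map_smul,
        hf p (List.mem_cons_self), ← Submodule.Quotient.mk_smul]
    rw [Submodule.Quotient.mk_add, map_add, hterm,
      ih (fun q hq => hD q (List.mem_cons_of_mem _ hq))
         (fun q hq => hf q (List.mem_cons_of_mem _ hq)),
      Submodule.Quotient.mk_add]

lemma s15_exists_S (f : Module.End R (U ⧸ LinearMap.range (Algebra.linearMap R U)))
    {N : Ideal R} (hN : N ∈ gabrielSets R U) : ∃ r : R, s15_S f N r := by
  classical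
  obtain ⟨l, hl, hs⟩ := s15_mem_smul (s15_one_mem hN)
  have hw : ∀ v : U, ∃ w : U,
      (Submodule.Quotient.mk w : U ⧸ LinearMap.range (Algebra.linearMap R U)) =
        f (Submodule.Quotient.mk v) :=
    fun v => Submodule.Quotient.mk_surjective _ _
  choose w hwspec using hw
  set t : U := (l.map fun p => p.1 • w p.2).sum with ht
  have key : ∀ z ∈ s15_col (R := R) (U := U) N,
      f (Submodule.Quotient.mk z) = Submodule.Quotient.mk (z * t) := by
    intro z hz
    have hz1 : z = (l.map fun p => p.1 • (z * p.2)).sum := by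
      have h := s15_mul_list_sum z id l
      simp only [id] at h
      rw [← h, hs, mul_one]
    have hD : ∀ p ∈ l, p.1 • z ∈ LinearMap.range (Algebra.linearMap R U) :=
      fun p hp => hz p.1 (hl p hp).1
    have hf : ∀ p ∈ l, f (Submodule.Quotient.mk p.2) = Submodule.Quotient.mk (w p.2) :=
      fun p hp => (hwspec p.2).symm
    have hpush := s15_push f z w l hD hf
    have hzt : z * t = (l.map fun p => p.1 • (z * w p.2)).sum := s15_mul_list_sum z w l
    rw [hzt]
    conv_lhs => rw [hz1]
    exact hpush
  have h1 : (Submodule.Quotient.mk ((1:U) * t) :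
      U ⧸ LinearMap.range (Algebra.linearMap R U)) = 0 := by
    have hk := key 1 (s15_one_mem_col N)
    have hmk1 : (Submodule.Quotient.mk (1:U) :
        U ⧸ LinearMap.range (Algebra.linearMap R U)) = 0 := by
      rw [Submodule.Quotient.mk_eq_zero]
      exact ⟨1, by simp⟩
    rw [hmk1, map_zero] at hk
    exact hk.symm
  rw [one_mul, Submodule.Quotient.mk_eq_zero] at h1
  obtain ⟨r, hr⟩ := h1
  rw [Algebra.linearMap_apply] at hr
  refine ⟨r, fun z hz => ?_⟩
  rw [key z hz, ← hr, Algebra.smul_def, mul_comm]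

/-- `r` is an admissible value for `f` at level `J`. -/
def s15_adm (f : Module.End R (U ⧸ LinearMap.range (Algebra.linearMap R U)))
    (J : Ideal R) (r : R) : Prop :=
  ∃ N : Ideal R, N ∈ gabrielSets R U ∧ s15_S f N r ∧
    (1 : U) ∈ J • s15_col (R := R) (U := U) N

lemma s15_adm_mono {f : Module.End R (U ⧸ LinearMap.range (Algebra.linearMap R U))}
    {J J' : Ideal R} (h : J ≤ J') {r : R} (hr : s15_adm f J r) : s15_adm f J' r := by
  obtain ⟨N, hN, hS, hone⟩ := hr
  exact ⟨N, hN, hS, Submodule.smul_mono_left h hone⟩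

lemma s15_exists_common [Module.Flat R U]
    (hepi : Function.Bijective (LinearMap.mul' R U))
    (J : Ideal R) (hJ : J ∈ gabrielSets R U) (l : List U) :
    ∃ N, N ∈ gabrielSets R U ∧ N ≤ J ∧ ∀ z ∈ l, N ≤ annCoset R U z := by
  induction l with
  | nil => exact ⟨J, hJ, le_rfl, by simp⟩
  | cons z l ih =>
    obtain ⟨N, hN, hNJ, hNl⟩ := ih
    refine ⟨annCoset R U z ⊓ N, s15_inf_mem (s15_ann_mem hepi z) hN,
      inf_le_right.trans hNJ, ?_⟩
    intro w hw
    rcases List.mem_cons.1 hw with h | h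
    · subst h; exact inf_le_left
    · exact inf_le_right.trans (hNl w h)

lemma s15_adm_exists [Module.Flat R U]
    (hepi : Function.Bijective (LinearMap.mul' R U))
    (f : Module.End R (U ⧸ LinearMap.range (Algebra.linearMap R U)))
    {J : Ideal R} (hJ : J ∈ gabrielSets R U) : ∃ r, s15_adm f J r := by
  obtain ⟨l, hl, hs⟩ := s15_mem_smul (s15_one_mem hJ)
  obtain ⟨N, hN, -, hNl⟩ := s15_exists_common hepi J hJ (l.map Prod.snd)
  obtain ⟨r, hr⟩ := s15_exists_S f hN
  refine ⟨r, N, hN, hr, ?_⟩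
  rw [← hs]
  refine list_sum_mem ?_
  intro y hy
  simp only [List.mem_map] at hy
  obtain ⟨p, hp, rfl⟩ := hy
  refine Submodule.smul_mem_smul (hl p hp).1 ?_
  intro a ha
  exact hNl p.2 (List.mem_map_of_mem hp) ha

lemma s15_smul_rep {J : Ideal R} (c : U) (l : List (R × U))
    (h : ∀ p ∈ l, p.1 ∈ J ∧ c * p.2 ∈ LinearMap.range (Algebra.linearMap R U)) :
    ∃ b ∈ J, algebraMap R U b = c * (l.map fun p => p.1 • p.2).sum := by
  induction l with
  | nil => exact ⟨0, J.zero_mem, by simp⟩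
  | cons p l ih =>
    obtain ⟨b0, hb0⟩ := (h p (List.mem_cons_self)).2
    rw [Algebra.linearMap_apply] at hb0
    obtain ⟨b, hbJ, hb⟩ := ih (fun q hq => h q (List.mem_cons_of_mem _ hq))
    refine ⟨p.1 * b0 + b, J.add_mem (J.mul_mem_right b0 (h p (List.mem_cons_self)).1) hbJ, ?_⟩
    rw [List.map_cons, List.sum_cons, mul_add, map_add, map_mul, hb0, hb,
      mul_smul_comm, Algebra.smul_def]

lemma s15_sub_mem (hinj : Function.Injective (algebraMap R U))
    (f : Module.End R (U ⧸ LinearMap.range (Algebra.linearMap R U)))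
    {J N : Ideal R} {s s' : R}
    (hS : s15_S f N s) (hS' : s15_S f N s')
    (hone : (1 : U) ∈ J • s15_col (R := R) (U := U) N) :
    s - s' ∈ J := by
  obtain ⟨l, hl, hs⟩ := s15_mem_smul hone
  have hc : ∀ p ∈ l, p.1 ∈ J ∧
      algebraMap R U (s - s') * p.2 ∈ LinearMap.range (Algebra.linearMap R U) := by
    intro p hp
    refine ⟨(hl p hp).1, ?_⟩
    have h1 := hS p.2 (hl p hp).2
    have h2 := hS' p.2 (hl p hp).2
    have h0 : (Submodule.Quotient.mk ((s - s') • p.2) :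
        U ⧸ LinearMap.range (Algebra.linearMap R U)) = 0 := by
      rw [sub_smul, Submodule.Quotient.mk_sub, ← h1, ← h2, sub_self]
    rw [Submodule.Quotient.mk_eq_zero] at h0
    rwa [← Algebra.smul_def]
  obtain ⟨b, hbJ, hb⟩ := s15_smul_rep (algebraMap R U (s - s')) l hc
  rw [hs, mul_one] at hb
  exact hinj hb ▸ hbJ

lemma s15_adm_unique (hinj : Function.Injective (algebraMap R U))
    (f : Module.End R (U ⧸ LinearMap.range (Algebra.linearMap R U)))
    {J : Ideal R} {r r' : R}
    (h : s15_adm f J r) (h' : s15_adm f J r') : r - r' ∈ J := by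
  obtain ⟨N, hN, hS, hone⟩ := h
  obtain ⟨N', hN', hS', hone'⟩ := h'
  obtain ⟨r'', hS''⟩ := s15_exists_S f (s15_inf_mem hN hN')
  have h1 : r - r'' ∈ J := s15_sub_mem hinj f hS (s15_S_mono inf_le_left hS'') hone
  have h2 : r' - r'' ∈ J := s15_sub_mem hinj f hS' (s15_S_mono inf_le_right hS'') hone'
  have h3 := J.sub_mem h1 h2
  simpa using h3

lemma s15_adm_apply (f : Module.End R (U ⧸ LinearMap.range (Algebra.linearMap R U)))
    {z : U} {s : R} (h : s15_adm f (annCoset R U z) s) :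
    f (Submodule.Quotient.mk z) = Submodule.Quotient.mk (s • z) := by
  obtain ⟨N, hN, hS, hone⟩ := h
  obtain ⟨l, hl, hsum⟩ := s15_mem_smul hone
  have hz1 : z = (l.map fun p => p.1 • (z * p.2)).sum := by
    have h := s15_mul_list_sum z id l
    simp only [id] at h
    rw [← h, hsum, mul_one]
  have hD : ∀ p ∈ l, p.1 • z ∈ LinearMap.range (Algebra.linearMap R U) :=
    fun p hp => (hl p hp).1
  have hf : ∀ p ∈ l, f (Submodule.Quotient.mk p.2) = Submodule.Quotient.mk (s • p.2) :=
    fun p hp => hS p.2 (hl p hp).2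
  have hpush := s15_push f z (fun v => s • v) l hD hf
  have hr : (l.map fun p => p.1 • (z * s • p.2)).sum = s • z := by
    have e : (fun p : R × U => p.1 • (z * s • p.2)) =
        fun p : R × U => p.1 • (s • (z * p.2)) := by
      funext p; rw [mul_smul_comm]
    rw [e, s15_smul_list_sum s (fun v => z * v) l, ← hz1]
  conv_lhs => rw [hz1]
  rw [hpush]
  exact congrArg _ hr

end Aux2


section Aux3

variable {R : Type u} [CommRing R] {U : Type u} [CommRing U] [Algebra R U]

lemma s15_mem_completion {x : (J : gabrielSets R U) → R ⧸ (J : Ideal R)} :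
    x ∈ gabrielCompletion R U ↔ ∀ (J J' : gabrielSets R U) (h : (J : Ideal R) ≤ (J' : Ideal R)),
      Ideal.Quotient.factor h (x J) = x J' := Iff.rfl

lemma s15_compat (x : gabrielCompletion R U) (J J' : gabrielSets R U)
    (h : (J : Ideal R) ≤ (J' : Ideal R)) :
    Ideal.Quotient.factor h (x.1 J) = x.1 J' :=
  (s15_mem_completion.1 x.2) J J' h

def s15_rep (x : gabrielCompletion R U) (J : gabrielSets R U) : R :=
  (Ideal.Quotient.mk_surjective (x.1 J)).choose

lemma s15_rep_spec (x : gabrielCompletion R U) (J : gabrielSets R U) :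
    Ideal.Quotient.mk (J : Ideal R) (s15_rep x J) = x.1 J :=
  (Ideal.Quotient.mk_surjective (x.1 J)).choose_spec

variable [Module.Flat R U]

def s15_V (hepi : Function.Bijective (LinearMap.mul' R U))
    (x : gabrielCompletion R U) (z : U) :
    U ⧸ LinearMap.range (Algebra.linearMap R U) :=
  Submodule.Quotient.mk (s15_rep x ⟨annCoset R U z, s15_ann_mem hepi z⟩ • z)

lemma s15_V_eq (hepi : Function.Bijective (LinearMap.mul' R U))
    (x : gabrielCompletion R U) {z : U} {r : R}
    (h : x.1 ⟨annCoset R U z, s15_ann_mem hepi z⟩ = Ideal.Quotient.mk (annCoset R U z) r) :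
    s15_V hepi x z = Submodule.Quotient.mk (r • z) := by
  have hs := s15_rep_spec x ⟨annCoset R U z, s15_ann_mem hepi z⟩
  rw [h, Ideal.Quotient.mk_eq_mk_iff_sub_mem] at hs
  show Submodule.Quotient.mk _ = Submodule.Quotient.mk _
  rw [Submodule.Quotient.eq, ← sub_smul]
  exact hs

lemma s15_V_eq' (hepi : Function.Bijective (LinearMap.mul' R U))
    (x : gabrielCompletion R U) {z : U} {N : Ideal R} (hN : N ∈ gabrielSets R U)
    (hle : N ≤ annCoset R U z) {r : R}
    (h : x.1 ⟨N, hN⟩ = Ideal.Quotient.mk N r) :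
    s15_V hepi x z = Submodule.Quotient.mk (r • z) := by
  apply s15_V_eq hepi x
  have hcomp := s15_compat x ⟨N, hN⟩ ⟨annCoset R U z, s15_ann_mem hepi z⟩ hle
  rw [← hcomp, h, Ideal.Quotient.factor_mk]

lemma s15_V_zero (hepi : Function.Bijective (LinearMap.mul' R U))
    (x : gabrielCompletion R U) {z : U}
    (hz : z ∈ LinearMap.range (Algebra.linearMap R U)) : s15_V hepi x z = 0 := by
  obtain ⟨s, hs⟩ := hz
  rw [Algebra.linearMap_apply] at hs
  show Submodule.Quotient.mk _ = 0
  rw [Submodule.Quotient.mk_eq_zero]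
  set c := s15_rep x ⟨annCoset R U z, s15_ann_mem hepi z⟩
  refine ⟨c * s, ?_⟩
  rw [Algebra.linearMap_apply, map_mul, ← Algebra.smul_def, hs]

set_option maxHeartbeats 1000000 in
def s15_Vlin (hepi : Function.Bijective (LinearMap.mul' R U))
    (x : gabrielCompletion R U) :
    U →ₗ[R] U ⧸ LinearMap.range (Algebra.linearMap R U) where
  toFun := s15_V hepi x
  map_add' := by
    intro z z'
    have hz := s15_ann_mem hepi z
    have hz' := s15_ann_mem hepi z'
    have hN : annCoset R U z ⊓ annCoset R U z' ∈ gabrielSets R U := s15_inf_mem hz hz'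
    have hspec := s15_rep_spec x ⟨annCoset R U z ⊓ annCoset R U z', hN⟩
    set r := s15_rep x ⟨annCoset R U z ⊓ annCoset R U z', hN⟩
    have hle3 : annCoset R U z ⊓ annCoset R U z' ≤ annCoset R U (z + z') := by
      intro a ha
      have h1 : a • z ∈ LinearMap.range (Algebra.linearMap R U) := ha.1
      have h2 : a • z' ∈ LinearMap.range (Algebra.linearMap R U) := ha.2
      show a • (z + z') ∈ LinearMap.range (Algebra.linearMap R U)
      rw [smul_add]
      exact add_mem h1 h2
    rw [s15_V_eq' hepi x hN hle3 hspec.symm, s15_V_eq' hepi x hN inf_le_left hspec.symm,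
      s15_V_eq' hepi x hN inf_le_right hspec.symm, smul_add, Submodule.Quotient.mk_add]
  map_smul' := by
    intro c z
    have hz := s15_ann_mem hepi z
    have hspec := s15_rep_spec x ⟨annCoset R U z, hz⟩
    set r := s15_rep x ⟨annCoset R U z, hz⟩
    have hle : annCoset R U z ≤ annCoset R U (c • z) := by
      intro a ha
      show a • (c • z) ∈ LinearMap.range (Algebra.linearMap R U)
      rw [smul_comm]
      exact Submodule.smul_mem _ c ha
    show s15_V hepi x (c • z) = c • s15_V hepi x z
    rw [s15_V_eq' hepi x hz hle hspec.symm, s15_V_eq' hepi x hz le_rfl hspec.symm,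
      ← Submodule.Quotient.mk_smul, smul_comm]

def s15_alpha (hepi : Function.Bijective (LinearMap.mul' R U))
    (x : gabrielCompletion R U) :
    Module.End R (U ⧸ LinearMap.range (Algebra.linearMap R U)) :=
  Submodule.liftQ _ (s15_Vlin hepi x) (by
    intro z hz
    rw [LinearMap.mem_ker]
    exact s15_V_zero hepi x hz)

lemma s15_alpha_mk (hepi : Function.Bijective (LinearMap.mul' R U))
    (x : gabrielCompletion R U) (z : U) :
    s15_alpha hepi x (Submodule.Quotient.mk z) = s15_V hepi x z := rfl

set_option maxHeartbeats 4000000 in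
def s15_alphaHom (hepi : Function.Bijective (LinearMap.mul' R U)) :
    gabrielCompletion R U →+* Module.End R (U ⧸ LinearMap.range (Algebra.linearMap R U)) where
  toFun := s15_alpha hepi
  map_one' := by
    apply LinearMap.ext
    intro k
    obtain ⟨z, rfl⟩ := Submodule.Quotient.mk_surjective _ k
    rw [s15_alpha_mk]
    have h1 : (1 : gabrielCompletion R U).1 ⟨annCoset R U z, s15_ann_mem hepi z⟩ =
        Ideal.Quotient.mk (annCoset R U z) 1 := by
      rw [map_one]; rfl
    rw [s15_V_eq hepi 1 h1, one_smul]
    rfl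
  map_mul' := by
    intro x y
    apply LinearMap.ext
    intro k
    obtain ⟨z, rfl⟩ := Submodule.Quotient.mk_surjective _ k
    have hz := s15_ann_mem hepi z
    have hx := s15_rep_spec x ⟨annCoset R U z, hz⟩
    have hy := s15_rep_spec y ⟨annCoset R U z, hz⟩
    set rx := s15_rep x ⟨annCoset R U z, hz⟩
    set ry := s15_rep y ⟨annCoset R U z, hz⟩
    have hxy : (x * y).1 ⟨annCoset R U z, hz⟩ = Ideal.Quotient.mk (annCoset R U z) (rx * ry) := by
      have hcoe : (x * y).1 = x.1 * y.1 := rfl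
      rw [hcoe, Pi.mul_apply, ← hx, ← hy, map_mul]
    rw [s15_alpha_mk, s15_V_eq hepi _ hxy, Module.End.mul_apply, s15_alpha_mk,
      s15_V_eq hepi y hy.symm, s15_alpha_mk]
    have hle : annCoset R U z ≤ annCoset R U (ry • z) := by
      intro a ha
      show a • (ry • z) ∈ LinearMap.range (Algebra.linearMap R U)
      rw [smul_comm]
      exact Submodule.smul_mem _ ry ha
    rw [s15_V_eq' hepi x hz hle hx.symm, mul_smul]
  map_zero' := by
    apply LinearMap.ext
    intro k
    obtain ⟨z, rfl⟩ := Submodule.Quotient.mk_surjective _ k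
    have h0 : (0 : gabrielCompletion R U).1 ⟨annCoset R U z, s15_ann_mem hepi z⟩ =
        Ideal.Quotient.mk (annCoset R U z) 0 := by
      rw [map_zero]; rfl
    rw [s15_alpha_mk, s15_V_eq hepi 0 h0, zero_smul]
    rfl
  map_add' := by
    intro x y
    apply LinearMap.ext
    intro k
    obtain ⟨z, rfl⟩ := Submodule.Quotient.mk_surjective _ k
    have hz := s15_ann_mem hepi z
    have hx := s15_rep_spec x ⟨annCoset R U z, hz⟩
    have hy := s15_rep_spec y ⟨annCoset R U z, hz⟩
    set rx := s15_rep x ⟨annCoset R U z, hz⟩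
    set ry := s15_rep y ⟨annCoset R U z, hz⟩
    have hxy : (x + y).1 ⟨annCoset R U z, hz⟩ =
        Ideal.Quotient.mk (annCoset R U z) (rx + ry) := by
      have hcoe : (x + y).1 = x.1 + y.1 := rfl
      rw [hcoe, Pi.add_apply, ← hx, ← hy, map_add]
    rw [s15_alpha_mk, s15_V_eq hepi _ hxy]
    show _ = s15_alpha hepi x (Submodule.Quotient.mk z) + s15_alpha hepi y (Submodule.Quotient.mk z)
    rw [s15_alpha_mk, s15_alpha_mk, s15_V_eq hepi x hx.symm, s15_V_eq hepi y hy.symm,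
      add_smul, Submodule.Quotient.mk_add]

set_option maxHeartbeats 1000000 in
set_option synthInstance.maxHeartbeats 1000000 in
lemma s15_alpha_inj (hinj : Function.Injective (algebraMap R U))
    (hepi : Function.Bijective (LinearMap.mul' R U)) :
    Function.Injective (s15_alphaHom (R := R) (U := U) hepi) := by
  rw [injective_iff_map_eq_zero]
  intro x hx
  apply Subtype.ext
  funext J
  obtain ⟨l, hl, hs⟩ := s15_mem_smul (s15_one_mem J.2)
  obtain ⟨N, hN, hNJ, hNl⟩ := s15_exists_common hepi J J.2 (l.map Prod.snd)
  have hspec := s15_rep_spec x ⟨N, hN⟩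
  set r := s15_rep x ⟨N, hN⟩
  have hrJ : x.1 J = Ideal.Quotient.mk (J : Ideal R) r := by
    have hcomp := s15_compat x ⟨N, hN⟩ J hNJ
    rw [← hcomp, ← hspec, Ideal.Quotient.factor_mk]
  have hterm : ∀ p ∈ l, algebraMap R U r * p.2 ∈ LinearMap.range (Algebra.linearMap R U) := by
    intro p hp
    have h1 : s15_V hepi x p.2 = Submodule.Quotient.mk (r • p.2) :=
      s15_V_eq' hepi x hN (hNl p.2 (List.mem_map_of_mem hp)) hspec.symm
    have h2 : s15_V hepi x p.2 = 0 := by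
      have h4 : s15_alphaHom hepi x (Submodule.Quotient.mk p.2) = 0 := by
        rw [hx]; rfl
      exact h4
    rw [h1, Submodule.Quotient.mk_eq_zero] at h2
    rwa [← Algebra.smul_def]
  obtain ⟨b, hbJ, hb⟩ := s15_smul_rep (algebraMap R U r) l
    (fun p hp => ⟨(hl p hp).1, hterm p hp⟩)
  rw [hs, mul_one] at hb
  have hrJ' : r ∈ (J : Ideal R) := hinj hb ▸ hbJ
  show x.1 J = 0
  rw [hrJ, Ideal.Quotient.eq_zero_iff_mem]
  exact hrJ'

set_option maxHeartbeats 1000000 in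
set_option synthInstance.maxHeartbeats 1000000 in
lemma s15_alpha_surj (hinj : Function.Injective (algebraMap R U))
    (hepi : Function.Bijective (LinearMap.mul' R U)) :
    Function.Surjective (s15_alphaHom (R := R) (U := U) hepi) := by
  intro f
  classical
  choose rf hrf using fun (J : gabrielSets R U) => s15_adm_exists hepi f J.2
  have hmem : (fun J : gabrielSets R U => Ideal.Quotient.mk (J : Ideal R) (rf J)) ∈
      gabrielCompletion R U := by
    rw [s15_mem_completion]
    intro J J' h
    rw [Ideal.Quotient.factor_mk h, Ideal.Quotient.mk_eq_mk_iff_sub_mem]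
    exact s15_adm_unique hinj f (s15_adm_mono h (hrf J)) (hrf J')
  refine ⟨⟨_, hmem⟩, ?_⟩
  apply LinearMap.ext
  intro k
  obtain ⟨z, rfl⟩ := Submodule.Quotient.mk_surjective _ k
  have hz := s15_ann_mem hepi z
  have hxJ : (⟨_, hmem⟩ : gabrielCompletion R U).1 ⟨annCoset R U z, hz⟩ =
      Ideal.Quotient.mk (annCoset R U z) (rf ⟨annCoset R U z, hz⟩) := rfl
  show s15_alpha hepi _ (Submodule.Quotient.mk z) = f (Submodule.Quotient.mk z)
  rw [s15_alpha_mk, s15_V_eq hepi _ hxJ, s15_adm_apply f (hrf ⟨annCoset R U z, hz⟩)]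

end Aux3


set_option maxHeartbeats 1000000 in
set_option synthInstance.maxHeartbeats 1000000 in
/-- for a flat injective ring epimorphism `u : R → U` of commutative rings
with associated Gabriel topology `𝒢`, the natural ring homomorphism from the completion
`Λ(R) = lim←_{J ∈ 𝒢} R/J` to `End_R(U/R)`, induced by the action of `Λ(R)` on the
`𝒢`-torsion module `U/R`, is a ring isomorphism. -/
theorem stmt15 {R : Type u} [CommRing R] {U : Type u} [CommRing U] [Algebra R U]
    [Module.Flat R U]
    (hinj : Function.Injective (algebraMap R U))
    (hepi : Function.Bijective (LinearMap.mul' R U)) :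
    ∃ α : gabrielCompletion R U ≃+*
        Module.End R (U ⧸ LinearMap.range (Algebra.linearMap R U)),
      ∀ (x : gabrielCompletion R U) (z : U) (r : R)
        (hz : annCoset R U z ∈ gabrielSets R U),
        x.1 ⟨annCoset R U z, hz⟩ = Ideal.Quotient.mk (annCoset R U z) r →
        α x (Submodule.Quotient.mk z) = Submodule.Quotient.mk (r • z) := by
  refine ⟨RingEquiv.ofBijective (s15_alphaHom hepi)
    ⟨s15_alpha_inj hinj hepi, s15_alpha_surj hinj hepi⟩, ?_⟩
  intro x z r hz h
  show s15_alphaHom hepi x (Submodule.Quotient.mk z) = _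
  rw [show (s15_alphaHom hepi x : Module.End R (U ⧸ LinearMap.range (Algebra.linearMap R U)))
    = s15_alpha hepi x from rfl, s15_alpha_mk]
  exact s15_V_eq hepi x h


end
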